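/- The intersection Z_{κ₁} ∩ Z_{κ₂} of the zonotopes of κ₁ (rows (1/3,2/3,0),(0,1/3,2/3),(2/3,0,1/3)) and κ₂ (rows (2/3,1/3,0),(0,2/3,1/3),(1/3,0,2/3)) equals the convex hull of the eight points (0,0,0), (5/6,2/6,2/6), (2/6,5/6,2/6), (2/6,2/6,5/6), (1/6,4/6,4/6), (4/6,1/6,4/6), (4/6,4/6,1/6), (1,1,1). -/
import Mathlib


def IsStochastic {X Y : Type*} [Fintype Y] (κ : Matrix X Y ℝ) : Prop :=
  (∀ x y, 0 ≤ κ x y) ∧ ∀ x, ∑ y, κ x y = 1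

def zonotope {X Y : Type*} [Fintype Y] (κ : Matrix X Y ℝ) : Set (X → ℝ) :=
  {v | ∃ a : Y → ℝ, (∀ y, a y ∈ Set.Icc (0:ℝ) 1) ∧ v = κ.mulVec a}

noncomputable def κ₁ : Matrix (Fin 3) (Fin 3) ℝ :=
  !![1/3, 2/3, 0; 0, 1/3, 2/3; 2/3, 0, 1/3]

noncomputable def κ₂ : Matrix (Fin 3) (Fin 3) ℝ :=
  !![2/3, 1/3, 0; 0, 2/3, 1/3; 1/3, 0, 2/3]

/-- The eight candidate vertices. -/
def Spts : Set (Fin 3 → ℝ) :=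
  {(![0, 0, 0] : Fin 3 → ℝ), ![5/6, 2/6, 2/6], ![2/6, 5/6, 2/6],
    ![2/6, 2/6, 5/6], ![1/6, 4/6, 4/6], ![4/6, 1/6, 4/6], ![4/6, 4/6, 1/6],
    ![1, 1, 1]}

lemma convex_zonotope {X Y : Type*} [Fintype Y] (κ : Matrix X Y ℝ) :
    Convex ℝ (zonotope κ) := by
  rintro x ⟨a, ha, rfl⟩ y ⟨b, hb, rfl⟩ s t hs ht hst
  refine ⟨s • a + t • b, ?_, ?_⟩
  · intro z
    have h1 := ha z
    have h2 := hb z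
    simp only [Set.mem_Icc] at h1 h2 ⊢
    constructor
    · have := add_nonneg (mul_nonneg hs h1.1) (mul_nonneg ht h2.1)
      simpa using this
    · have := add_le_add (mul_le_mul_of_nonneg_left h1.2 hs)
        (mul_le_mul_of_nonneg_left h2.2 ht)
      simp only [mul_one] at this
      simpa [hst] using this.trans_eq (by linarith)
  · simp [Matrix.mulVec_add, Matrix.mulVec_smul]

lemma mem_hull4 {S : Set (Fin 3 → ℝ)} {p q r s x : Fin 3 → ℝ}
    (hp : p ∈ S) (hq : q ∈ S) (hr : r ∈ S) (hs : s ∈ S)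
    {w1 w2 w3 w4 : ℝ} (h1 : 0 ≤ w1) (h2 : 0 ≤ w2) (h3 : 0 ≤ w3) (h4 : 0 ≤ w4)
    (hsum : w1 + w2 + w3 + w4 = 1)
    (hx : x = w1 • p + w2 • q + w3 • r + w4 • s) : x ∈ convexHull ℝ S := by
  have key := (convex_convexHull ℝ S).sum_mem
    (t := (Finset.univ : Finset (Fin 4))) (w := ![w1, w2, w3, w4]) (z := ![p, q, r, s])
    (fun i _ => by fin_cases i <;> assumption)
    (by simp [Fin.sum_univ_four, hsum])
    (fun i _ => by
      fin_cases i <;> simp only [Matrix.cons_val_zero, Matrix.cons_val_one,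
        Matrix.head_cons] <;> exact subset_convexHull ℝ S (by assumption))
  rw [Fin.sum_univ_four] at key
  simpa [hx] using key

set_option maxHeartbeats 2000000 in
theorem intersection_eq_convexHull :
    zonotope κ₁ ∩ zonotope κ₂ =
      convexHull ℝ {(![0, 0, 0] : Fin 3 → ℝ), ![5/6, 2/6, 2/6], ![2/6, 5/6, 2/6],
        ![2/6, 2/6, 5/6], ![1/6, 4/6, 4/6], ![4/6, 1/6, 4/6], ![4/6, 4/6, 1/6],
        ![1, 1, 1]} := by
  show zonotope κ₁ ∩ zonotope κ₂ = convexHull ℝ Spts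
  have hP0 : (![0,0,0] : Fin 3 → ℝ) ∈ Spts := Set.mem_insert _ _
  have hP1 : (![5/6,2/6,2/6] : Fin 3 → ℝ) ∈ Spts :=
    Set.mem_insert_of_mem _ (Set.mem_insert _ _)
  have hP2 : (![2/6,5/6,2/6] : Fin 3 → ℝ) ∈ Spts :=
    Set.mem_insert_of_mem _ (Set.mem_insert_of_mem _ (Set.mem_insert _ _))
  have hP3 : (![2/6,2/6,5/6] : Fin 3 → ℝ) ∈ Spts :=
    Set.mem_insert_of_mem _ (Set.mem_insert_of_mem _ (Set.mem_insert_of_mem _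
      (Set.mem_insert _ _)))
  have hP4 : (![1/6,4/6,4/6] : Fin 3 → ℝ) ∈ Spts :=
    Set.mem_insert_of_mem _ (Set.mem_insert_of_mem _ (Set.mem_insert_of_mem _
      (Set.mem_insert_of_mem _ (Set.mem_insert _ _))))
  have hP5 : (![4/6,1/6,4/6] : Fin 3 → ℝ) ∈ Spts :=
    Set.mem_insert_of_mem _ (Set.mem_insert_of_mem _ (Set.mem_insert_of_mem _
      (Set.mem_insert_of_mem _ (Set.mem_insert_of_mem _ (Set.mem_insert _ _)))))
  have hP6 : (![4/6,4/6,1/6] : Fin 3 → ℝ) ∈ Spts :=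
    Set.mem_insert_of_mem _ (Set.mem_insert_of_mem _ (Set.mem_insert_of_mem _
      (Set.mem_insert_of_mem _ (Set.mem_insert_of_mem _ (Set.mem_insert_of_mem _
        (Set.mem_insert _ _))))))
  have hP7 : (![1,1,1] : Fin 3 → ℝ) ∈ Spts :=
    Set.mem_insert_of_mem _ (Set.mem_insert_of_mem _ (Set.mem_insert_of_mem _
      (Set.mem_insert_of_mem _ (Set.mem_insert_of_mem _ (Set.mem_insert_of_mem _
        (Set.mem_insert_of_mem _ rfl))))))
  apply Set.Subset.antisymm
  · -- hard direction
    rintro v ⟨⟨a, ha, rfl⟩, ⟨b, hb, heq⟩⟩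
    have e0 : 1/3 * a 0 + 2/3 * a 1 = 2/3 * b 0 + 1/3 * b 1 := by
      have h := congrFun heq 0
      simp [κ₁, κ₂, Matrix.mulVec, dotProduct, Fin.sum_univ_three] at h
      linarith
    have e1 : 1/3 * a 1 + 2/3 * a 2 = 2/3 * b 1 + 1/3 * b 2 := by
      have h := congrFun heq 1
      simp [κ₁, κ₂, Matrix.mulVec, dotProduct, Fin.sum_univ_three] at h
      linarith
    have e2 : 2/3 * a 0 + 1/3 * a 2 = 1/3 * b 0 + 2/3 * b 2 := by
      have h := congrFun heq 2
      simp [κ₁, κ₂, Matrix.mulVec, dotProduct, Fin.sum_univ_three] at h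
      linarith
    obtain ⟨ha0l, ha0u⟩ := ha 0
    obtain ⟨ha1l, ha1u⟩ := ha 1
    obtain ⟨ha2l, ha2u⟩ := ha 2
    obtain ⟨hb0l, hb0u⟩ := hb 0
    obtain ⟨hb1l, hb1u⟩ := hb 1
    obtain ⟨hb2l, hb2u⟩ := hb 2
    have hv : ∀ i, κ₁.mulVec a i = ![1/3 * a 0 + 2/3 * a 1,
        1/3 * a 1 + 2/3 * a 2, 2/3 * a 0 + 1/3 * a 2] i := by
      intro i
      fin_cases i <;>
        simp [κ₁, Matrix.mulVec, dotProduct, Fin.sum_univ_three] <;> ring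
    -- d1 = b 0 - a 2, d2 = b 1 - a 0, d3 = b 2 - a 1
    rcases le_total 0 (b 0 - a 2) with hd1 | hd1
    · rcases le_total 0 (b 1 - a 0) with hd2 | hd2
      · -- tet {0, P1, P6, P7}
        refine mem_hull4 hP0 hP1 hP6 hP7 (w1 := 1 - a 1) (w2 := b 0 - a 2)
          (w3 := b 1 - a 0) (w4 := b 2) (by linarith) (by linarith) (by linarith)
          (by linarith) (by linarith) ?_
        funext i
        rw [hv i]
        fin_cases i <;>
          simp [Matrix.cons_val_zero, Matrix.cons_val_one, Matrix.head_cons] <;> linarith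
      · rcases le_total 0 (b 2 - a 1) with hd3 | hd3
        · -- tet {0, P3, P5, P7}
          refine mem_hull4 hP0 hP3 hP5 hP7 (w1 := 1 - a 0) (w2 := b 2 - a 1)
            (w3 := b 0 - a 2) (w4 := b 1) (by linarith) (by linarith) (by linarith)
            (by linarith) (by linarith) ?_
          funext i
          rw [hv i]
          fin_cases i <;>
            simp [Matrix.cons_val_zero, Matrix.cons_val_one, Matrix.head_cons] <;> linarith
        · -- d2 ≤ 0, d3 ≤ 0 : tet {0, P1, P5, P7}
          refine mem_hull4 hP0 hP1 hP5 hP7 (w1 := 1 - b 0) (w2 := a 1 - b 2)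
            (w3 := a 0 - b 1) (w4 := a 2) (by linarith) (by linarith) (by linarith)
            (by linarith) (by linarith) ?_
          funext i
          rw [hv i]
          fin_cases i <;>
            simp [Matrix.cons_val_zero, Matrix.cons_val_one, Matrix.head_cons] <;> linarith
    · rcases le_total 0 (b 1 - a 0) with hd2 | hd2
      · rcases le_total 0 (b 2 - a 1) with hd3 | hd3
        · -- tet {0, P2, P4, P7}
          refine mem_hull4 hP0 hP2 hP4 hP7 (w1 := 1 - a 2) (w2 := b 1 - a 0)
            (w3 := b 2 - a 1) (w4 := b 0) (by linarith) (by linarith) (by linarith)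
            (by linarith) (by linarith) ?_
          funext i
          rw [hv i]
          fin_cases i <;>
            simp [Matrix.cons_val_zero, Matrix.cons_val_one, Matrix.head_cons] <;> linarith
        · -- d1 ≤ 0, d3 ≤ 0 : tet {0, P2, P6, P7}
          refine mem_hull4 hP0 hP2 hP6 hP7 (w1 := 1 - b 1) (w2 := a 2 - b 0)
            (w3 := a 1 - b 2) (w4 := a 0) (by linarith) (by linarith) (by linarith)
            (by linarith) (by linarith) ?_
          funext i
          rw [hv i]
          fin_cases i <;>
            simp [Matrix.cons_val_zero, Matrix.cons_val_one, Matrix.head_cons] <;> linarith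
      · -- d1 ≤ 0, d2 ≤ 0 : tet {0, P3, P4, P7}
        refine mem_hull4 hP0 hP3 hP4 hP7 (w1 := 1 - b 2) (w2 := a 0 - b 1)
          (w3 := a 2 - b 0) (w4 := a 1) (by linarith) (by linarith) (by linarith)
          (by linarith) (by linarith) ?_
        funext i
        rw [hv i]
        fin_cases i <;>
          simp [Matrix.cons_val_zero, Matrix.cons_val_one, Matrix.head_cons] <;> linarith
  · -- easy direction
    apply convexHull_min _ ((convex_zonotope κ₁).inter (convex_zonotope κ₂))
    intro p hp
    have mem1 : ∀ (w : Fin 3 → ℝ), (∀ y, w y ∈ Set.Icc (0:ℝ) 1) →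
        ∀ (q : Fin 3 → ℝ), q = κ₁.mulVec w → q ∈ zonotope κ₁ :=
      fun w hw q hq => ⟨w, hw, hq⟩
    have mem2 : ∀ (w : Fin 3 → ℝ), (∀ y, w y ∈ Set.Icc (0:ℝ) 1) →
        ∀ (q : Fin 3 → ℝ), q = κ₂.mulVec w → q ∈ zonotope κ₂ :=
      fun w hw q hq => ⟨w, hw, hq⟩
    rcases hp with h | h | h | h | h | h | h | h <;> subst h <;> constructor
    · exact mem1 ![0,0,0] (by intro y; fin_cases y <;> norm_num) _ (by
        funext i; fin_cases i <;>
          simp [κ₁, Matrix.mulVec, dotProduct, Fin.sum_univ_three])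
    · exact mem2 ![0,0,0] (by intro y; fin_cases y <;> norm_num) _ (by
        funext i; fin_cases i <;>
          simp [κ₂, Matrix.mulVec, dotProduct, Fin.sum_univ_three])
    · exact mem1 ![1/2,1,0] (by intro y; fin_cases y <;> norm_num) _ (by
        funext i; fin_cases i <;>
          simp [κ₁, Matrix.mulVec, dotProduct, Fin.sum_univ_three] <;> norm_num)
    · exact mem2 ![1,1/2,0] (by intro y; fin_cases y <;> norm_num) _ (by
        funext i; fin_cases i <;>
          simp [κ₂, Matrix.mulVec, dotProduct, Fin.sum_univ_three] <;> norm_num)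
    · exact mem1 ![0,1/2,1] (by intro y; fin_cases y <;> norm_num) _ (by
        funext i; fin_cases i <;>
          simp [κ₁, Matrix.mulVec, dotProduct, Fin.sum_univ_three] <;> norm_num)
    · exact mem2 ![0,1,1/2] (by intro y; fin_cases y <;> norm_num) _ (by
        funext i; fin_cases i <;>
          simp [κ₂, Matrix.mulVec, dotProduct, Fin.sum_univ_three] <;> norm_num)
    · exact mem1 ![1,0,1/2] (by intro y; fin_cases y <;> norm_num) _ (by
        funext i; fin_cases i <;>
          simp [κ₁, Matrix.mulVec, dotProduct, Fin.sum_univ_three] <;> norm_num)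
    · exact mem2 ![1/2,0,1] (by intro y; fin_cases y <;> norm_num) _ (by
        funext i; fin_cases i <;>
          simp [κ₂, Matrix.mulVec, dotProduct, Fin.sum_univ_three] <;> norm_num)
    · exact mem1 ![1/2,0,1] (by intro y; fin_cases y <;> norm_num) _ (by
        funext i; fin_cases i <;>
          simp [κ₁, Matrix.mulVec, dotProduct, Fin.sum_univ_three] <;> norm_num)
    · exact mem2 ![0,1/2,1] (by intro y; fin_cases y <;> norm_num) _ (by
        funext i; fin_cases i <;>
          simp [κ₂, Matrix.mulVec, dotProduct, Fin.sum_univ_three] <;> norm_num)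
    · exact mem1 ![1,1/2,0] (by intro y; fin_cases y <;> norm_num) _ (by
        funext i; fin_cases i <;>
          simp [κ₁, Matrix.mulVec, dotProduct, Fin.sum_univ_three] <;> norm_num)
    · exact mem2 ![1,0,1/2] (by intro y; fin_cases y <;> norm_num) _ (by
        funext i; fin_cases i <;>
          simp [κ₂, Matrix.mulVec, dotProduct, Fin.sum_univ_three] <;> norm_num)
    · exact mem1 ![0,1,1/2] (by intro y; fin_cases y <;> norm_num) _ (by
        funext i; fin_cases i <;>
          simp [κ₁, Matrix.mulVec, dotProduct, Fin.sum_univ_three] <;> norm_num)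
    · exact mem2 ![1/2,1,0] (by intro y; fin_cases y <;> norm_num) _ (by
        funext i; fin_cases i <;>
          simp [κ₂, Matrix.mulVec, dotProduct, Fin.sum_univ_three] <;> norm_num)
    · exact mem1 ![1,1,1] (by intro y; fin_cases y <;> norm_num) _ (by
        funext i; fin_cases i <;>
          simp [κ₁, Matrix.mulVec, dotProduct, Fin.sum_univ_three] <;> norm_num)
    · exact mem2 ![1,1,1] (by intro y; fin_cases y <;> norm_num) _ (by
        funext i; fin_cases i <;>
          simp [κ₂, Matrix.mulVec, dotProduct, Fin.sum_univ_three] <;> norm_num)
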